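/- For nonnegative random variables T_1, …, T_k with finite second moments, E[max_{i=1,…,k} T_i] ≤ max_{i} E[T_i] + sqrt(((k-1)/k) · Σ_{i=1}^k Var(T_i)). -/

import Mathlib

open MeasureTheory ProbabilityTheory

lemma integrable_sup'_aux {Ω ι : Type*} [MeasureSpace Ω] (s : Finset ι) (hs : s.Nonempty)
    (f : ι → Ω → ℝ) (hf : ∀ i, Integrable (f i) ℙ) :
    Integrable (fun ω => s.sup' hs fun i => f i ω) ℙ := by
  induction hs using Finset.Nonempty.cons_induction with
  | singleton a => simpa using hf a
  | cons a s h hs ih =>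
      have : (fun ω => (Finset.cons a s h).sup' (Finset.cons_nonempty h) fun i => f i ω)
          = fun ω => f a ω ⊔ (s.sup' hs fun i => f i ω) := by
        funext ω; exact Finset.sup'_cons (f := fun i => f i ω) hs
      rw [this]
      exact (hf a).sup ih

/-- Aven's inequality: for nonnegative random variables `T i` with finite second moments,
`E[max_i T_i] ≤ max_i E[T_i] + sqrt(((k-1)/k) * Σ_i Var(T_i))`. -/
theorem aven_inequality
    {Ω ι : Type*} [MeasureSpace Ω] [IsProbabilityMeasure (ℙ : Measure Ω)]
    [Fintype ι] [Nonempty ι]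
    (T : ι → Ω → ℝ) (hnn : ∀ i ω, 0 ≤ T i ω)
    (hL2 : ∀ i, MemLp (T i) 2 ℙ) :
    ∫ ω, (Finset.univ.sup' Finset.univ_nonempty fun i => T i ω) ∂ℙ
      ≤ (Finset.univ.sup' Finset.univ_nonempty fun i => ∫ ω, T i ω ∂ℙ)
        + Real.sqrt (((Fintype.card ι - 1 : ℝ) / Fintype.card ι) * ∑ i, variance (T i) ℙ) := by
  classical
  set m : ι → ℝ := fun i => ∫ ω, T i ω ∂ℙ with hm
  have hTint : ∀ i, Integrable (T i) ℙ := fun i => (hL2 i).integrable one_le_two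
  set M : ℝ := Finset.univ.sup' Finset.univ_nonempty m with hMdef
  set K : ℝ := (Fintype.card ι : ℝ) with hKdef
  set S : ℝ := ∑ i, variance (T i) ℙ with hSdef
  have hS : 0 ≤ S := Finset.sum_nonneg fun i _ => variance_nonneg _ _
  have hk1 : 1 ≤ Fintype.card ι := Fintype.card_pos
  rcases eq_or_lt_of_le hk1 with hcard | hcard
  · -- one element
    obtain ⟨i₀, hi₀⟩ := Fintype.card_eq_one_iff.mp hcard.symm
    have hsup : ∀ (f : ι → ℝ), Finset.univ.sup' Finset.univ_nonempty f = f i₀ := fun f =>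
      le_antisymm (Finset.sup'_le _ _ fun j _ => by rw [hi₀ j])
        (Finset.le_sup' f (Finset.mem_univ i₀))
    simp only [hsup, hMdef, hm]
    exact le_add_of_nonneg_right (Real.sqrt_nonneg _)
  · -- 2 ≤ card
    have hK2 : (2 : ℝ) ≤ K := by
      have h2 : 2 ≤ Fintype.card ι := hcard
      rw [hKdef]; exact_mod_cast h2
    have hKpos : (0 : ℝ) < K := by linarith
    have hKm1 : (0 : ℝ) < K - 1 := by linarith
    set u : ℝ := Real.sqrt (S / (K * (K - 1))) with hu
    have hu0 : 0 ≤ u := Real.sqrt_nonneg _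
    have hu2 : u ^ 2 = S / (K * (K - 1)) := Real.sq_sqrt (by positivity)
    set c : ℝ := -u with hc
    -- integrability infrastructure
    have hXm : ∀ i, MemLp (fun ω => T i ω - m i - c) 2 ℙ := fun i =>
      ((hL2 i).sub (memLp_const (m i))).sub (memLp_const c)
    have hsq_int : ∀ i, Integrable (fun ω => (T i ω - m i - c) ^ 2) ℙ := fun i =>
      (hXm i).integrable_sq
    have hsum_int : Integrable (fun ω => ∑ i, (T i ω - m i - c) ^ 2) ℙ :=
      integrable_finset_sum _ fun i _ => hsq_int i
    have hsum_nn : ∀ ω, 0 ≤ ∑ i, (T i ω - m i - c) ^ 2 := fun ω =>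
      Finset.sum_nonneg fun i _ => sq_nonneg _
    set g : Ω → ℝ := fun ω => Real.sqrt (∑ i, (T i ω - m i - c) ^ 2) with hg
    have hg_meas : AEStronglyMeasurable g ℙ := by
      apply Real.continuous_sqrt.comp_aestronglyMeasurable
      apply Finset.aestronglyMeasurable_fun_sum
      intro i _
      have h1 := (hXm i).aestronglyMeasurable
      simpa [pow_two] using h1.fun_mul h1
    have hg_nn : ∀ ω, 0 ≤ g ω := fun ω => Real.sqrt_nonneg _
    have hgsq : (fun ω => g ω ^ 2) = fun ω => ∑ i, (T i ω - m i - c) ^ 2 :=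
      funext fun ω => Real.sq_sqrt (hsum_nn ω)
    have hg2 : MemLp g 2 ℙ := by
      rw [memLp_two_iff_integrable_sq hg_meas, hgsq]
      exact hsum_int
    have hg_int : Integrable g ℙ := hg2.integrable one_le_two
    -- value of ∫ g²
    have hint_each : ∀ i, ∫ ω, (T i ω - m i - c) ^ 2 ∂ℙ = variance (T i) ℙ + c ^ 2 := by
      intro i
      have hXv : variance (T i) ℙ = ∫ ω, (T i ω - m i) ^ 2 ∂ℙ := variance_eq_integral (hL2 i).aemeasurable
      have hXint : Integrable (fun ω => T i ω - m i) ℙ := (hTint i).sub (integrable_const _)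
      have hX2int : Integrable (fun ω => (T i ω - m i) ^ 2) ℙ :=
        ((hL2 i).sub (memLp_const _)).integrable_sq
      have hiX : ∫ ω, (T i ω - m i) ∂ℙ = 0 := by
        rw [integral_sub (hTint i) (integrable_const _)]
        simp [hm]
      have hI1 : Integrable (fun ω => (T i ω - m i) ^ 2 - 2 * c * (T i ω - m i)) ℙ :=
        hX2int.sub (hXint.const_mul (2 * c))
      rw [show (fun ω => (T i ω - m i - c) ^ 2)
          = fun ω => ((T i ω - m i) ^ 2 - 2 * c * (T i ω - m i)) + c ^ 2 from
          funext fun ω => by ring]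
      rw [integral_add hI1 (integrable_const _),
        integral_sub hX2int (hXint.const_mul (2 * c)), integral_const_mul, hiX, integral_const]
      simp [hXv]
    have hsum_val : ∫ ω, (∑ i, (T i ω - m i - c) ^ 2) ∂ℙ = S + K * c ^ 2 := by
      rw [integral_finset_sum _ fun i _ => hsq_int i]
      simp_rw [hint_each]
      rw [Finset.sum_add_distrib, Finset.sum_const, Finset.card_univ, nsmul_eq_mul, hSdef, hKdef]
    -- Cauchy–Schwarz through variance nonnegativity
    have hvar := variance_nonneg g ℙ
    rw [variance_eq_sub hg2] at hvar
    have hEg_nn : 0 ≤ ∫ ω, g ω ∂ℙ := integral_nonneg hg_nn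
    have hEg_sq : (∫ ω, g ω ∂ℙ) ^ 2 ≤ S + K * c ^ 2 := by
      have h2 : ∫ ω, g ω ^ 2 ∂ℙ = S + K * c ^ 2 := by rw [hgsq]; exact hsum_val
      have h3 : (∫ ω, g ω ∂ℙ) ^ 2 ≤ ∫ ω, g ω ^ 2 ∂ℙ := by
        have : (ℙ : Measure Ω)[g ^ 2] = ∫ ω, g ω ^ 2 ∂ℙ := by rfl
        nlinarith [hvar]
      linarith
    have hEg : ∫ ω, g ω ∂ℙ ≤ Real.sqrt (S + K * c ^ 2) :=
      (Real.le_sqrt hEg_nn (by positivity)).mpr hEg_sq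
    -- pointwise bound
    have hpt : ∀ ω, (Finset.univ.sup' Finset.univ_nonempty fun i => T i ω) ≤ (M + c) + g ω := by
      intro ω
      apply Finset.sup'_le
      intro i _
      have h1 : m i ≤ M := Finset.le_sup' m (Finset.mem_univ i)
      have h2 : T i ω - m i - c ≤ g ω := by
        calc T i ω - m i - c ≤ |T i ω - m i - c| := le_abs_self _
          _ = Real.sqrt ((T i ω - m i - c) ^ 2) := (Real.sqrt_sq_eq_abs _).symm
          _ ≤ g ω := Real.sqrt_le_sqrt
              (Finset.single_le_sum (f := fun j => (T j ω - m j - c) ^ 2)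
                (fun j _ => sq_nonneg _) (Finset.mem_univ i))
      linarith
    have hsupT_int : Integrable (fun ω => Finset.univ.sup' Finset.univ_nonempty fun i => T i ω) ℙ :=
      integrable_sup'_aux _ _ _ hTint
    have hmain : ∫ ω, (Finset.univ.sup' Finset.univ_nonempty fun i => T i ω) ∂ℙ
        ≤ ∫ ω, ((M + c) + g ω) ∂ℙ :=
      integral_mono hsupT_int ((integrable_const _).add hg_int) hpt
    rw [integral_add (integrable_const _) hg_int, integral_const] at hmain
    simp only [probReal_univ, measure_univ, ENNReal.toReal_one, one_smul, smul_eq_mul, one_mul] at hmain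
    -- algebra
    have hc2 : c ^ 2 = S / (K * (K - 1)) := by rw [hc, neg_pow]; simpa using hu2
    have halg1 : S + K * c ^ 2 = K ^ 2 * (S / (K * (K - 1))) := by
      rw [hc2]; field_simp; ring
    have hsqrt1 : Real.sqrt (S + K * c ^ 2) = K * u := by
      rw [halg1, Real.sqrt_mul (sq_nonneg K), Real.sqrt_sq hKpos.le, ← hu]
    have halg2 : (K - 1) / K * S = (K - 1) ^ 2 * (S / (K * (K - 1))) := by
      field_simp
    have hsqrt2 : Real.sqrt ((K - 1) / K * S) = (K - 1) * u := by
      rw [halg2, Real.sqrt_mul (sq_nonneg _), Real.sqrt_sq hKm1.le, ← hu]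
    rw [hsqrt2]
    linarith [hmain, hEg, hsqrt1, hc]
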